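/- Single-source shortest path as an optimal transport dual: let G be a finite connected simple graph on vertex set V with n = |V| ≥ 2 vertices, w a positive weight on the edges of G, and for vertices a, v let d(a,v) be the infimum over all walks from a to v of the sum of the weights of their edges. Fix a vertex v₁ and define b ∈ ℝ^V by b_{v₁} = −1 and b_v = 1/(n−1) for v ≠ v₁. Then the supremum of Σ_{v ∈ V} b_v u_v over all u ∈ ℝ^V satisfying |u_i − u_j| ≤ w({i,j}) for every edge {i,j} of G is attained at u = d(v₁,·) and equals (1/(n−1)) Σ_{v ≠ v₁} d(v₁, v). -/

import Mathlib

open BigOperators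

/-- Single-source shortest path as an optimal transport dual: on a finite connected
weighted simple graph with `n ≥ 2` vertices, with `b_{v₁} = −1` and `b_v = 1/(n−1)`
otherwise, the supremum of `Σ_v b_v u_v` over `u` satisfying `|u_i − u_j| ≤ w({i,j})`
for every edge is attained at the shortest-path distance `u = d(v₁,·)` and equals
`(1/(n−1)) Σ_{v ≠ v₁} d(v₁, v)`. -/
theorem sssp_as_ot_dual {V : Type*} [Fintype V] [DecidableEq V]
    (G : SimpleGraph V) (hconn : G.Connected)
    (hn : 2 ≤ Fintype.card V)
    (w : Sym2 V → ℝ) (hw : ∀ e ∈ G.edgeSet, 0 < w e)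
    (d : V → V → ℝ)
    (hd : ∀ a v, d a v = sInf {r : ℝ | ∃ p : G.Walk a v, r = (p.edges.map w).sum})
    (v₁ : V)
    (b : V → ℝ)
    (hb : b = fun v => if v = v₁ then (-1 : ℝ) else 1 / ((Fintype.card V : ℝ) - 1)) :
    (∀ i j, G.Adj i j → |d v₁ i - d v₁ j| ≤ w s(i, j)) ∧
    IsGreatest {r : ℝ | ∃ u : V → ℝ,
        (∀ i j, G.Adj i j → |u i - u j| ≤ w s(i, j)) ∧ r = ∑ v, b v * u v}
      (∑ v, b v * d v₁ v) ∧
    (∑ v, b v * d v₁ v) =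
      (1 / ((Fintype.card V : ℝ) - 1)) * ∑ v ∈ Finset.univ.erase v₁, d v₁ v := by
  -- basic facts about the set of walk weights
  set S : V → V → Set ℝ :=
    fun a v => {r : ℝ | ∃ p : G.Walk a v, r = (p.edges.map w).sum} with hS
  have hne : ∀ a v, (S a v).Nonempty := by
    intro a v
    obtain ⟨p⟩ := hconn.preconnected a v
    exact ⟨_, p, rfl⟩
  have hlb : ∀ a v, ∀ r ∈ S a v, (0 : ℝ) ≤ r := by
    rintro a v r ⟨p, rfl⟩
    apply List.sum_nonneg
    intro x hx
    obtain ⟨e, he, rfl⟩ := List.mem_map.mp hx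
    exact (hw e (p.edges_subset_edgeSet he)).le
  have hbdd : ∀ a v, BddBelow (S a v) := fun a v => ⟨0, hlb a v⟩
  have hd0 : ∀ a v, 0 ≤ d a v := by
    intro a v; rw [hd]; exact le_csInf (hne a v) (hlb a v)
  have hdaa : ∀ a, d a a = 0 := by
    intro a
    refine le_antisymm ?_ (hd0 a a)
    rw [hd]
    exact csInf_le (hbdd a a) ⟨SimpleGraph.Walk.nil, by simp⟩
  -- telescoping bound for feasible u along any walk
  have hwalk : ∀ (u : V → ℝ), (∀ i j, G.Adj i j → |u i - u j| ≤ w s(i, j)) →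
      ∀ (a v : V) (p : G.Walk a v), u v - u a ≤ (p.edges.map w).sum := by
    intro u hu a v p
    induction p with
    | nil => simp
    | @cons x y z h p ih =>
      simp only [SimpleGraph.Walk.edges_cons, List.map_cons, List.sum_cons]
      have h1 := abs_le.mp (hu _ _ h)
      linarith
  have hfeas_d : ∀ u : V → ℝ, (∀ i j, G.Adj i j → |u i - u j| ≤ w s(i, j)) →
      ∀ v, u v - u v₁ ≤ d v₁ v := by
    intro u hu v
    rw [hd]
    refine le_csInf (hne v₁ v) ?_
    rintro r ⟨p, rfl⟩
    exact hwalk u hu v₁ v p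
  -- feasibility of d
  have hdfeas : ∀ i j, G.Adj i j → |d v₁ i - d v₁ j| ≤ w s(i, j) := by
    have key : ∀ i j, G.Adj i j → d v₁ i - d v₁ j ≤ w s(i, j) := by
      intro i j hij
      have h1 : d v₁ i - w s(i, j) ≤ d v₁ j := by
        rw [hd v₁ j]
        refine le_csInf (hne v₁ j) ?_
        rintro r ⟨p, rfl⟩
        have hmem : (p.edges.map w).sum + w s(j, i) ∈ S v₁ i := by
          refine ⟨p.concat hij.symm, ?_⟩
          simp [SimpleGraph.Walk.edges_concat]
        have := (hd v₁ i) ▸ csInf_le (hbdd v₁ i) hmem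
        have hsw : s(j, i) = s(i, j) := Sym2.eq_swap
        rw [hsw] at this
        linarith
      linarith
    intro i j hij
    rw [abs_le]
    constructor
    · have := key j i hij.symm
      rw [Sym2.eq_swap] at this
      linarith
    · exact key i j hij
  refine ⟨hdfeas, ⟨⟨d v₁, hdfeas, rfl⟩, ?_⟩, ?_⟩
  · -- upper bound
    rintro r ⟨u, hu, rfl⟩
    have hcard : ((Fintype.card V : ℝ) - 1) ≠ 0 := by
      have : (2 : ℝ) ≤ (Fintype.card V : ℝ) := by exact_mod_cast hn
      linarith
    have hsumb : ∑ v, b v = 0 := by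
      rw [hb, ← Finset.sum_erase_add _ _ (Finset.mem_univ v₁)]
      simp only [if_pos rfl]
      rw [Finset.sum_ite_of_false (by intro x hx; exact Finset.ne_of_mem_erase hx)]
      rw [Finset.sum_const, Finset.card_erase_of_mem (Finset.mem_univ v₁),
        Finset.card_univ, nsmul_eq_mul]
      have : ((Fintype.card V - 1 : ℕ) : ℝ) = (Fintype.card V : ℝ) - 1 := by
        have : 1 ≤ Fintype.card V := by omega
        push_cast [this]; ring
      rw [this]
      field_simp
      norm_num
    have hshift : ∑ v, b v * u v = ∑ v, b v * (u v - u v₁) := by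
      have : ∑ v, b v * (u v - u v₁) = ∑ v, b v * u v - (∑ v, b v) * u v₁ := by
        rw [Finset.sum_mul]
        rw [← Finset.sum_sub_distrib]
        congr 1; ext v; ring
      rw [this, hsumb]; ring
    rw [hshift]
    apply Finset.sum_le_sum
    intro v _
    by_cases hv : v = v₁
    · subst hv; rw [hdaa]; ring_nf; simp
    · have hbv : 0 ≤ b v := by
        rw [hb]; simp only [if_neg hv]
        have h2 : (2 : ℝ) ≤ (Fintype.card V : ℝ) := by exact_mod_cast hn
        exact (div_pos one_pos (by linarith)).le
      exact mul_le_mul_of_nonneg_left (hfeas_d u hu v) hbv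
  · -- value
    rw [← Finset.sum_erase_add _ _ (Finset.mem_univ v₁), hdaa, mul_zero, add_zero,
      Finset.mul_sum]
    apply Finset.sum_congr rfl
    intro v hv
    rw [hb]
    simp [Finset.ne_of_mem_erase hv]
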